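/- For every poset system S = (P, m, A) and every prime power q, k(P, m, A; q) = k(D(S), m, A; q), where D(S) is the poset obtained from P by deleting every relation (a, x) with a ∈ A, a ≺_P x ≺_P m, and A ∩ lb(x) = {a}. -/

import Mathlib

/-
Common framework: pattern posets, pattern algebras and pattern groups
(in the sense of Isaacs), the spaces `L_P(q)` realizing the dual of the pattern
algebra, the co-adjoint action, poset systems `(P, m, A)` and their orbit counts
`k(P, m, A; q)`, and combinatorial operations on pattern posets, following
"On Higman's conjecture" by Pak and Soffer.
-/

open Matrix

/-- A pattern poset on `{0,…,n-1}`: a strict partial order on `Fin n` that has the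
standard order of the integers as a linear extension. -/
structure PatternPoset (n : ℕ) where
  lt : Fin n → Fin n → Prop
  lt_trans : ∀ {i j k : Fin n}, lt i j → lt j k → lt i k
  lt_le : ∀ {i j : Fin n}, lt i j → (i : ℕ) < (j : ℕ)

namespace PatternPoset

variable {n : ℕ}

theorem lt_irrefl (P : PatternPoset n) (i : Fin n) : ¬ P.lt i i :=
  fun h => Nat.lt_irrefl _ (P.lt_le h)

theorem ne_of_lt (P : PatternPoset n) {i j : Fin n} (h : P.lt i j) : i ≠ j := by
  intro e; subst e; exact P.lt_irrefl i h

/-- The pattern algebra `𝒰_P(q)`, as a subspace of the `n × n` matrices: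
matrices supported on the cells `(i,j)` with `i ≺ j`. -/
def patternAlg (P : PatternPoset n) (F : Type*) [Field F] :
    Submodule F (Matrix (Fin n) (Fin n) F) where
  carrier := {X | ∀ i j : Fin n, ¬ P.lt i j → X i j = 0}
  add_mem' := by
    intro a b ha hb i j h
    simp [Matrix.add_apply, ha i j h, hb i j h]
  zero_mem' := by intro i j h; simp
  smul_mem' := by
    intro c a ha i j h
    simp [Matrix.smul_apply, ha i j h]

theorem mul_mem_patternAlg {P : PatternPoset n} {F : Type*} [Field F]
    {X Y : Matrix (Fin n) (Fin n) F} (hX : X ∈ P.patternAlg F) (hY : Y ∈ P.patternAlg F) :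
    X * Y ∈ P.patternAlg F := by
  intro i j h
  rw [Matrix.mul_apply]
  apply Finset.sum_eq_zero
  intro k _
  by_cases h1 : P.lt i k
  · by_cases h2 : P.lt k j
    · exact absurd (P.lt_trans h1 h2) h
    · rw [hY k j h2, mul_zero]
  · rw [hX i k h1, zero_mul]

theorem pow_apply_ne_zero {P : PatternPoset n} {F : Type*} [Field F]
    {X : Matrix (Fin n) (Fin n) F} (hX : X ∈ P.patternAlg F) :
    ∀ t (i j : Fin n), (X ^ t) i j ≠ 0 → (i : ℕ) + t ≤ (j : ℕ) := by
  intro t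
  induction t with
  | zero =>
    intro i j h
    rw [pow_zero] at h
    by_cases hij : i = j
    · subst hij; simp
    · exact absurd (Matrix.one_apply_ne hij) h
  | succ t ih =>
    intro i j h
    rw [pow_succ, Matrix.mul_apply] at h
    obtain ⟨k, -, hk⟩ := Finset.exists_ne_zero_of_sum_ne_zero h
    have h1 : (X ^ t) i k ≠ 0 := fun e => hk (by rw [e, zero_mul])
    have h2 : X k j ≠ 0 := fun e => hk (by rw [e, mul_zero])
    have h3 : P.lt k j := by by_contra hc; exact h2 (hX k j hc)
    have h4 := ih i k h1
    have h5 := P.lt_le h3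
    omega

theorem pow_card_eq_zero {P : PatternPoset n} {F : Type*} [Field F]
    {X : Matrix (Fin n) (Fin n) F} (hX : X ∈ P.patternAlg F) : X ^ n = 0 := by
  ext i j
  simp only [Matrix.zero_apply]
  by_contra h
  have h1 := pow_apply_ne_zero hX n i j h
  have h2 := j.isLt
  omega

theorem pow_succ_mem_patternAlg {P : PatternPoset n} {F : Type*} [Field F]
    {X : Matrix (Fin n) (Fin n) F} (hX : X ∈ P.patternAlg F) (t : ℕ) :
    X ^ (t + 1) ∈ P.patternAlg F := by
  induction t with
  | zero => simpa using hX
  | succ t ih => rw [pow_succ]; exact mul_mem_patternAlg ih hX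

theorem inv_sub_one_mem {P : PatternPoset n} {F : Type*} [Field F]
    {a : (Matrix (Fin n) (Fin n) F)ˣ}
    (ha : ((a : Matrix (Fin n) (Fin n) F) - 1) ∈ P.patternAlg F) :
    (((a⁻¹ : (Matrix (Fin n) (Fin n) F)ˣ) : Matrix (Fin n) (Fin n) F) - 1)
      ∈ P.patternAlg F := by
  rcases Nat.eq_zero_or_pos n with hn | hn
  · subst hn; intro i j _; exact i.elim0
  obtain ⟨m, rfl⟩ : ∃ m, n = m + 1 := ⟨n - 1, by omega⟩
  set X : Matrix (Fin (m + 1)) (Fin (m + 1)) F :=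
    (a : Matrix (Fin (m + 1)) (Fin (m + 1)) F) - 1 with hXdef
  have hXmem : -X ∈ P.patternAlg F := (P.patternAlg F).neg_mem ha
  have hXn : (-X) ^ (m + 1) = 0 := pow_card_eq_zero hXmem
  have key : (∑ t ∈ Finset.range (m + 1), (-X) ^ t) *
      (a : Matrix (Fin (m + 1)) (Fin (m + 1)) F) = 1 := by
    have hgeom := geom_sum_mul (-X) (m + 1)
    rw [hXn] at hgeom
    have ha' : (a : Matrix (Fin (m + 1)) (Fin (m + 1)) F) = -((-X) - 1) := by
      rw [hXdef]; abel
    rw [ha', mul_neg, hgeom]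
    simp
  have hinv : ((a⁻¹ : (Matrix (Fin (m + 1)) (Fin (m + 1)) F)ˣ) :
        Matrix (Fin (m + 1)) (Fin (m + 1)) F)
      = ∑ t ∈ Finset.range (m + 1), (-X) ^ t :=
    Units.inv_eq_of_mul_eq_one_left key
  rw [hinv]
  have hsplit : (∑ t ∈ Finset.range (m + 1), (-X) ^ t) - 1
      = ∑ t ∈ Finset.range m, (-X) ^ (t + 1) := by
    rw [Finset.sum_range_succ' (fun t => (-X) ^ t) m]
    simp
  rw [hsplit]
  exact Submodule.sum_mem _ (fun t _ => pow_succ_mem_patternAlg hXmem t)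

theorem entry_cases {P : PatternPoset n} {F : Type*} [Field F]
    {M : Matrix (Fin n) (Fin n) F} (hM : (M - 1) ∈ P.patternAlg F)
    {i k : Fin n} (h : M i k ≠ 0) : i = k ∨ P.lt i k := by
  by_contra hc
  push_neg at hc
  apply h
  have h1 := hM i k hc.2
  have h2 : (1 : Matrix (Fin n) (Fin n) F) i k = 0 := Matrix.one_apply_ne hc.1
  calc M i k = (M - 1) i k + (1 : Matrix (Fin n) (Fin n) F) i k := by
        simp [Matrix.sub_apply]
    _ = 0 := by rw [h1, h2, add_zero]

theorem conj_entry_zero {P : PatternPoset n} {F : Type*} [Field F]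
    {A B Y : Matrix (Fin n) (Fin n) F}
    (hA : (A - 1) ∈ P.patternAlg F) (hB : (B - 1) ∈ P.patternAlg F)
    (i j : Fin n)
    (hzero : ∀ k l : Fin n, (i = k ∨ P.lt i k) → (l = j ∨ P.lt l j) → Y k l = 0) :
    (A * Y * B) i j = 0 := by
  rw [Matrix.mul_apply]
  apply Finset.sum_eq_zero
  intro l _
  rw [Matrix.mul_apply, Finset.sum_mul]
  apply Finset.sum_eq_zero
  intro k _
  by_cases hAik : A i k = 0
  · rw [hAik, zero_mul, zero_mul]
  by_cases hBlj : B l j = 0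
  · rw [hBlj, mul_zero]
  rw [hzero k l (entry_cases hA hAik) (entry_cases hB hBlj), mul_zero, zero_mul]

/-- The pattern group `U_P(q) = {1 + X : X ∈ 𝒰_P(q)}`, as a subgroup of the units of the
matrix ring. -/
def patternGroup (P : PatternPoset n) (F : Type*) [Field F] :
    Subgroup (Matrix (Fin n) (Fin n) F)ˣ where
  carrier := {g | ((g : Matrix (Fin n) (Fin n) F) - 1) ∈ P.patternAlg F}
  one_mem' := by
    simp only [Set.mem_setOf_eq, Units.val_one, sub_self]
    exact (P.patternAlg F).zero_mem
  mul_mem' := by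
    intro a b ha hb
    simp only [Set.mem_setOf_eq, Units.val_mul] at *
    have h : (a : Matrix (Fin n) (Fin n) F) * b - 1 =
        ((a : Matrix (Fin n) (Fin n) F) - 1) * ((b : Matrix (Fin n) (Fin n) F) - 1)
          + (((a : Matrix (Fin n) (Fin n) F) - 1) + ((b : Matrix (Fin n) (Fin n) F) - 1)) := by
      noncomm_ring
    rw [h]
    exact (P.patternAlg F).add_mem (mul_mem_patternAlg ha hb) ((P.patternAlg F).add_mem ha hb)
  inv_mem' := fun ha => inv_sub_one_mem ha

/-- `k(P; q)`: the number of conjugacy classes of the pattern group `U_P(q)`. -/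
noncomputable def kOf (P : PatternPoset n) (F : Type*) [Field F] : ℕ :=
  Nat.card (ConjClasses (P.patternGroup F))

/-- The chain poset `C_n`, whose pattern group is the full unitriangular group `U_n(q)`. -/
def chainPoset (n : ℕ) : PatternPoset n where
  lt i j := (i : ℕ) < (j : ℕ)
  lt_trans := fun h1 h2 => Nat.lt_trans h1 h2
  lt_le := fun h => h

/-- The induced subposet `P − m`, obtained by deleting the element `m`. -/
def delete (P : PatternPoset (n + 1)) (m : Fin (n + 1)) : PatternPoset n where
  lt i j := P.lt (m.succAbove i) (m.succAbove j)
  lt_trans := fun h1 h2 => P.lt_trans h1 h2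
  lt_le := fun {i j} h => by
    have h2 : m.succAbove i < m.succAbove j := by
      rw [Fin.lt_def]; exact P.lt_le h
    exact Fin.lt_def.mp (Fin.succAbove_lt_succAbove_iff.mp h2)

/-- The dual poset `P*`, relabeled by `i ↦ n + 1 − i` so that the standard order is
again a linear extension. -/
def dual (P : PatternPoset n) : PatternPoset n where
  lt i j := P.lt j.rev i.rev
  lt_trans := fun h1 h2 => P.lt_trans h2 h1
  lt_le := fun {i j} h => by
    have h1 : j.rev < i.rev := by rw [Fin.lt_def]; exact P.lt_le h
    exact Fin.lt_def.mp (Fin.rev_lt_rev.mp h1)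

/-- The disjoint union `P ⨿ Q` of two pattern posets. -/
def disjUnion {m n : ℕ} (P : PatternPoset m) (Q : PatternPoset n) :
    PatternPoset (m + n) where
  lt x y :=
    match finSumFinEquiv.symm x, finSumFinEquiv.symm y with
    | Sum.inl a, Sum.inl b => P.lt a b
    | Sum.inr a, Sum.inr b => Q.lt a b
    | _, _ => False
  lt_trans := by
    intro i j k hij hjk
    rcases hi : finSumFinEquiv.symm i with a | a <;>
      rcases hj : finSumFinEquiv.symm j with b | b <;>
        rcases hk : finSumFinEquiv.symm k with c | c <;>
          simp only [hi, hj, hk] at hij hjk ⊢ <;>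
            first
              | exact P.lt_trans hij hjk
              | exact Q.lt_trans hij hjk
  lt_le := by
    intro i j h
    rcases hi : finSumFinEquiv.symm i with a | a <;>
      rcases hj : finSumFinEquiv.symm j with b | b <;>
        simp only [hi, hj] at h
    · have hi' : i = Fin.castAdd _ a := by
        rw [← finSumFinEquiv_apply_left, ← hi, Equiv.apply_symm_apply]
      have hj' : j = Fin.castAdd _ b := by
        rw [← finSumFinEquiv_apply_left, ← hj, Equiv.apply_symm_apply]
      rw [hi', hj']
      exact P.lt_le h
    · have hi' : i = Fin.natAdd _ a := by
        rw [← finSumFinEquiv_apply_right, ← hi, Equiv.apply_symm_apply]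
      have hj' : j = Fin.natAdd _ b := by
        rw [← finSumFinEquiv_apply_right, ← hj, Equiv.apply_symm_apply]
      rw [hi', hj']
      simpa using Q.lt_le h

/-- The subspace of matrices quotiented away in `L_P(q)`:
those vanishing on all cells `(i,j)` with `j ≺ i`. -/
def lowQuot (P : PatternPoset n) (F : Type*) [Field F] :
    Submodule F (Matrix (Fin n) (Fin n) F) where
  carrier := {X | ∀ i j : Fin n, P.lt j i → X i j = 0}
  add_mem' := by
    intro a b ha hb i j h
    simp [Matrix.add_apply, ha i j h, hb i j h]
  zero_mem' := by intro i j h; simp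
  smul_mem' := by
    intro c a ha i j h
    simp [Matrix.smul_apply, ha i j h]

/-- The space `L_P(q)`, realizing the dual `𝒰_P(q)*` as a quotient of the
space of all `n × n` matrices. -/
abbrev LSpace (P : PatternPoset n) (F : Type*) [Field F] :=
  Matrix (Fin n) (Fin n) F ⧸ P.lowQuot F

end PatternPoset

/-- Conjugation `X ↦ g X g⁻¹` by a unit, as a linear map on matrices. -/
def conjLin {n : ℕ} (F : Type*) [Field F] (g : (Matrix (Fin n) (Fin n) F)ˣ) :
    Matrix (Fin n) (Fin n) F →ₗ[F] Matrix (Fin n) (Fin n) F where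
  toFun X := (g : Matrix (Fin n) (Fin n) F) * X *
    ((g⁻¹ : (Matrix (Fin n) (Fin n) F)ˣ) : Matrix (Fin n) (Fin n) F)
  map_add' X Y := by rw [mul_add, add_mul]
  map_smul' c X := by rw [mul_smul_comm, smul_mul_assoc]; rfl

namespace PatternPoset

variable {n : ℕ}

/-- The co-adjoint action `K_g(X) = g X g⁻¹` of the pattern group on `L_P(q)`. -/
noncomputable def coadj (P : PatternPoset n) (F : Type*) [Field F]
    (g : P.patternGroup F) : P.LSpace F →ₗ[F] P.LSpace F :=
  Submodule.mapQ _ _ (conjLin F (g : (Matrix (Fin n) (Fin n) F)ˣ)) (by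
    intro Y hY
    simp only [Submodule.mem_comap]
    have hg : ((g : (Matrix (Fin n) (Fin n) F)ˣ) : Matrix (Fin n) (Fin n) F) - 1
        ∈ P.patternAlg F := g.2
    have hginv : (((g : (Matrix (Fin n) (Fin n) F)ˣ)⁻¹ : (Matrix (Fin n) (Fin n) F)ˣ) :
        Matrix (Fin n) (Fin n) F) - 1 ∈ P.patternAlg F := inv_sub_one_mem g.2
    intro i j hji
    apply conj_entry_zero hg hginv
    intro k l hik hlj
    apply hY k l
    rcases hik with rfl | hik <;> rcases hlj with rfl | hlj
    · exact hji
    · exact P.lt_trans hlj hji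
    · exact P.lt_trans hji hik
    · exact P.lt_trans (P.lt_trans hlj hji) hik)

/-- The poset `P^(m)`: the poset on the same ground set whose only relations
are `x ≺ m` for `x ≺_P m`. -/
def restrictTo (P : PatternPoset n) (m : Fin n) : PatternPoset n where
  lt x y := y = m ∧ P.lt x y
  lt_trans := fun h1 h2 => ⟨h2.1, P.lt_trans h1.2 h2.2⟩
  lt_le := fun h => P.lt_le h.2

/-- The canonical projection `π : L_P(q) → L_{P^(m)}(q)`. -/
noncomputable def projL (P : PatternPoset n) (m : Fin n) (F : Type*) [Field F] :
    P.LSpace F →ₗ[F] (P.restrictTo m).LSpace F :=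
  Submodule.mapQ _ _ LinearMap.id (by
    intro X hX
    simp only [Submodule.mem_comap, LinearMap.id_coe, id_eq]
    intro i j h
    exact hX i j h.2)

end PatternPoset

/-- The elementary transvection `E_{i,j}(α) = 1 + α e_{i,j}` as a unit of the matrix ring. -/
def transvectionUnit {n : ℕ} {F : Type*} [Field F] (i j : Fin n) (hij : i ≠ j) (α : F) :
    (Matrix (Fin n) (Fin n) F)ˣ where
  val := 1 + Matrix.single i j α
  inv := 1 + Matrix.single i j (-α)
  val_inv := by
    have h0 : Matrix.single i j α * Matrix.single i j (-α) = 0 :=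
      Matrix.single_mul_single_of_ne (h := hij.symm) ..
    have h1 : Matrix.single i j α + Matrix.single i j (-α) = 0 := by
      rw [← Matrix.single_add]; simp
    rw [add_mul, mul_add, mul_add, one_mul, mul_one, h0]
    rw [add_zero, add_assoc, one_mul, add_comm (Matrix.single i j (-α)), h1, add_zero]
  inv_val := by
    have h0 : Matrix.single i j (-α) * Matrix.single i j α = 0 :=
      Matrix.single_mul_single_of_ne (h := hij.symm) ..
    have h1 : Matrix.single i j (-α) + Matrix.single i j α = 0 := by
      rw [← Matrix.single_add]; simp
    rw [add_mul, mul_add, mul_add, one_mul, mul_one, h0]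
    rw [add_zero, add_assoc, one_mul, add_comm (Matrix.single i j α), h1, add_zero]

/-- A poset system `(P, m, A)`: a pattern poset `P`, a maximal element `m`,
and an anti-chain `A ⊆ lb(m)`. -/
structure PosetSystem (n : ℕ) where
  P : PatternPoset n
  m : Fin n
  m_max : ∀ x, ¬ P.lt m x
  A : Finset (Fin n)
  A_lb : ∀ a ∈ A, P.lt a m
  A_anti : ∀ a ∈ A, ∀ b ∈ A, ¬ P.lt a b

namespace PosetSystem

variable {n : ℕ}

/-- The element `1_A = Σ_{a ∈ A} e_{m,a}` of `L_{P^(m)}(q)`. -/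
noncomputable def oneA (S : PosetSystem n) (F : Type*) [Field F] :
    (S.P.restrictTo S.m).LSpace F :=
  Submodule.Quotient.mk (∑ a ∈ S.A, Matrix.single S.m a (1 : F))

/-- The action of `U_P(q)` on `L_{P^(m)}(q)` induced by the co-adjoint action. -/
noncomputable def coadjQ (S : PosetSystem n) (F : Type*) [Field F]
    (g : S.P.patternGroup F) :
    (S.P.restrictTo S.m).LSpace F →ₗ[F] (S.P.restrictTo S.m).LSpace F :=
  Submodule.mapQ _ _ (conjLin F (g : (Matrix (Fin n) (Fin n) F)ˣ)) (by
    intro Y hY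
    simp only [Submodule.mem_comap]
    have hg : ((g : (Matrix (Fin n) (Fin n) F)ˣ) : Matrix (Fin n) (Fin n) F) - 1
        ∈ S.P.patternAlg F := g.2
    have hginv : (((g : (Matrix (Fin n) (Fin n) F)ˣ)⁻¹ : (Matrix (Fin n) (Fin n) F)ˣ) :
        Matrix (Fin n) (Fin n) F) - 1 ∈ S.P.patternAlg F :=
      PatternPoset.inv_sub_one_mem g.2
    intro i j hji
    obtain ⟨him, hjilt⟩ := hji
    apply PatternPoset.conj_entry_zero hg hginv
    intro k l hik hlj
    have hk : k = S.m := by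
      rcases hik with rfl | hik
      · exact him
      · rw [him] at hik; exact absurd hik (S.m_max k)
    have hlm : S.P.lt l S.m := by
      rcases hlj with rfl | hlj
      · rw [← him]; exact hjilt
      · rw [him] at hjilt; exact S.P.lt_trans hlj hjilt
    subst hk
    exact hY S.m l ⟨rfl, hlm⟩)

/-- The stabilizer of `1_A` in `U_P(q)` for the induced action on `L_{P^(m)}(q)`. -/
noncomputable def stab (S : PosetSystem n) (F : Type*) [Field F] :
    Set (S.P.patternGroup F) :=
  {g | S.coadjQ F g (S.oneA F) = S.oneA F}

/-- The fiber `π⁻¹(1_A) ⊆ L_P(q)`. -/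
noncomputable def fiber (S : PosetSystem n) (F : Type*) [Field F] :
    Set (S.P.LSpace F) :=
  {X | S.P.projL S.m F X = S.oneA F}

/-- `k(P, m, A; q)`: the number of orbits of `Stab_{U_P(q)}(1_A)` acting on the fiber
`π⁻¹(1_A)` under the co-adjoint action, counted as the number of distinct orbit sets. -/
noncomputable def systemK (S : PosetSystem n) (F : Type*) [Field F] : ℕ :=
  Nat.card {O : Set (S.P.LSpace F) // ∃ X ∈ S.fiber F,
    O = {Y | ∃ g ∈ S.stab F, S.P.coadj F g X = Y}}

/-- The poset `D(S)`: delete from `P` every relation `(a, x)` with `a ∈ A`,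
`a ≺ x ≺ m`, and `A ∩ lb(x) = {a}`. -/
def D (S : PosetSystem n) : PatternPoset n where
  lt x y := S.P.lt x y ∧
    ¬ (x ∈ S.A ∧ S.P.lt y S.m ∧ ∀ b ∈ S.A, S.P.lt b y → b = x)
  lt_trans := by
    rintro i j k ⟨hij, hi⟩ ⟨hjk, -⟩
    refine ⟨S.P.lt_trans hij hjk, ?_⟩
    rintro ⟨hiA, hkm, huniq⟩
    exact hi ⟨hiA, S.P.lt_trans hjk hkm, fun b hb hbj => huniq b hb (S.P.lt_trans hbj hjk)⟩
  lt_le := fun h => S.P.lt_le h.1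

/-- `D(S)` together with the same `m` and `A`, as a poset system. -/
def DSys (S : PosetSystem n) : PosetSystem n where
  P := S.D
  m := S.m
  m_max := fun x h => S.m_max x h.1
  A := S.A
  A_lb := fun a ha => ⟨S.A_lb a ha, fun h => S.P.lt_irrefl S.m h.2.1⟩
  A_anti := fun a ha b hb h => S.A_anti a ha b hb h.1

end PosetSystem


/-! ### Auxiliary development for Lemma 4.6 -/

namespace PatternPoset

variable {n : ℕ} (P : PatternPoset n) (F : Type) [Field F]

lemma mem_lowQuot {X : Matrix (Fin n) (Fin n) F} :
    X ∈ P.lowQuot F ↔ ∀ i j : Fin n, P.lt j i → X i j = 0 := Iff.rfl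

lemma mem_patternAlg {X : Matrix (Fin n) (Fin n) F} :
    X ∈ P.patternAlg F ↔ ∀ i j : Fin n, ¬ P.lt i j → X i j = 0 := Iff.rfl

lemma coadj_mk (g : P.patternGroup F) (Y : Matrix (Fin n) (Fin n) F) :
    P.coadj F g (Submodule.Quotient.mk Y) =
      Submodule.Quotient.mk
        (((g : (Matrix (Fin n) (Fin n) F)ˣ) : Matrix (Fin n) (Fin n) F) * Y *
          ((((g : (Matrix (Fin n) (Fin n) F)ˣ))⁻¹ : (Matrix (Fin n) (Fin n) F)ˣ) :
            Matrix (Fin n) (Fin n) F)) := by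
  unfold coadj
  rw [Submodule.mapQ_apply]
  rfl

lemma projL_mk (m : Fin n) (Y : Matrix (Fin n) (Fin n) F) :
    P.projL m F (Submodule.Quotient.mk Y) = Submodule.Quotient.mk Y := by
  unfold projL
  rw [Submodule.mapQ_apply]
  rfl

lemma coadj_mul (g h : P.patternGroup F) (x : P.LSpace F) :
    P.coadj F (g * h) x = P.coadj F g (P.coadj F h x) := by
  obtain ⟨Y, rfl⟩ := Submodule.Quotient.mk_surjective _ x
  rw [coadj_mk, coadj_mk, coadj_mk]
  congr 1
  simp [mul_assoc]

lemma coadj_one (x : P.LSpace F) : P.coadj F 1 x = x := by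
  obtain ⟨Y, rfl⟩ := Submodule.Quotient.mk_surjective _ x
  rw [coadj_mk]
  simp

end PatternPoset

namespace PosetSystem

variable {n : ℕ} (S : PosetSystem n) (F : Type) [Field F]

/-- The matrix `M = Σ_{a∈A} e_{m,a}` representing `1_A`. -/
noncomputable def Mmat : Matrix (Fin n) (Fin n) F :=
  ∑ a ∈ S.A, Matrix.single S.m a (1 : F)

lemma Mmat_apply (i l : Fin n) :
    S.Mmat F i l = if S.m = i ∧ l ∈ S.A then (1 : F) else 0 := by
  classical
  unfold Mmat
  rw [Matrix.sum_apply]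
  simp only [Matrix.single, Matrix.of_apply]
  by_cases h : S.m = i
  · subst h
    simp [Finset.sum_ite_eq]
  · simp [h]

lemma oneA_eq : S.oneA F = Submodule.Quotient.mk (S.Mmat F) := rfl

lemma DSys_Mmat : S.DSys.Mmat F = S.Mmat F := rfl

lemma coadjQ_mk (g : S.P.patternGroup F) (Y : Matrix (Fin n) (Fin n) F) :
    S.coadjQ F g (Submodule.Quotient.mk Y) =
      Submodule.Quotient.mk
        (((g : (Matrix (Fin n) (Fin n) F)ˣ) : Matrix (Fin n) (Fin n) F) * Y *
          ((((g : (Matrix (Fin n) (Fin n) F)ˣ))⁻¹ : (Matrix (Fin n) (Fin n) F)ˣ) :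
            Matrix (Fin n) (Fin n) F)) := by
  unfold coadjQ
  rw [Submodule.mapQ_apply]
  rfl

lemma coadjQ_mul (g h : S.P.patternGroup F) (x : (S.P.restrictTo S.m).LSpace F) :
    S.coadjQ F (g * h) x = S.coadjQ F g (S.coadjQ F h x) := by
  obtain ⟨Y, rfl⟩ := Submodule.Quotient.mk_surjective _ x
  rw [coadjQ_mk, coadjQ_mk, coadjQ_mk]
  congr 1
  simp [mul_assoc]

lemma coadjQ_one (x : (S.P.restrictTo S.m).LSpace F) : S.coadjQ F 1 x = x := by
  obtain ⟨Y, rfl⟩ := Submodule.Quotient.mk_surjective _ x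
  rw [coadjQ_mk]
  simp

lemma mem_stab_iff (g : S.P.patternGroup F) :
    g ∈ S.stab F ↔
      (((g : (Matrix (Fin n) (Fin n) F)ˣ) : Matrix (Fin n) (Fin n) F) * S.Mmat F *
          ((((g : (Matrix (Fin n) (Fin n) F)ˣ))⁻¹ : (Matrix (Fin n) (Fin n) F)ˣ) :
            Matrix (Fin n) (Fin n) F) - S.Mmat F)
        ∈ (S.P.restrictTo S.m).lowQuot F := by
  show S.coadjQ F g (S.oneA F) = S.oneA F ↔ _
  rw [oneA_eq, coadjQ_mk]
  exact Submodule.Quotient.eq _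

lemma one_mem_stab : (1 : S.P.patternGroup F) ∈ S.stab F := by
  show S.coadjQ F 1 (S.oneA F) = S.oneA F
  exact S.coadjQ_one F _

lemma mul_mem_stab {g h : S.P.patternGroup F} (hg : g ∈ S.stab F) (hh : h ∈ S.stab F) :
    g * h ∈ S.stab F := by
  show S.coadjQ F (g * h) (S.oneA F) = S.oneA F
  rw [S.coadjQ_mul F]
  rw [show S.coadjQ F h (S.oneA F) = S.oneA F from hh]
  exact hg

lemma inv_mem_stab {g : S.P.patternGroup F} (hg : g ∈ S.stab F) : g⁻¹ ∈ S.stab F := by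
  show S.coadjQ F g⁻¹ (S.oneA F) = S.oneA F
  conv_lhs => rw [show S.oneA F = S.coadjQ F g (S.oneA F) from hg.symm]
  rw [← S.coadjQ_mul F, inv_mul_cancel]
  exact S.coadjQ_one F _

lemma mem_fiber_iff (Y : Matrix (Fin n) (Fin n) F) :
    (Submodule.Quotient.mk Y : S.P.LSpace F) ∈ S.fiber F ↔
      Y - S.Mmat F ∈ (S.P.restrictTo S.m).lowQuot F := by
  show S.P.projL S.m F (Submodule.Quotient.mk Y) = S.oneA F ↔ _
  rw [PatternPoset.projL_mk, oneA_eq]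
  exact Submodule.Quotient.eq _

lemma coadj_mem_fiber {g : S.P.patternGroup F} (hg : g ∈ S.stab F)
    {X : S.P.LSpace F} (hX : X ∈ S.fiber F) :
    S.P.coadj F g X ∈ S.fiber F := by
  obtain ⟨Y, rfl⟩ := Submodule.Quotient.mk_surjective _ X
  have hX' : S.P.projL S.m F (Submodule.Quotient.mk Y) = S.oneA F := hX
  rw [PatternPoset.projL_mk] at hX'
  show S.P.projL S.m F _ = S.oneA F
  rw [PatternPoset.coadj_mk, PatternPoset.projL_mk]
  rw [← S.coadjQ_mk F g Y, hX']
  exact hg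

lemma restrict_lt_iff (x y : Fin n) :
    (S.DSys.P.restrictTo S.DSys.m).lt x y ↔ (S.P.restrictTo S.m).lt x y := by
  constructor
  · rintro ⟨h1, h2⟩
    exact ⟨h1, h2.1⟩
  · rintro ⟨h1, h2⟩
    refine ⟨h1, h2, ?_⟩
    rintro ⟨-, hc, -⟩
    subst h1
    exact S.P.lt_irrefl _ hc

lemma restrict_lowQuot_eq :
    (S.DSys.P.restrictTo S.DSys.m).lowQuot F = (S.P.restrictTo S.m).lowQuot F := by
  ext X
  rw [PatternPoset.mem_lowQuot, PatternPoset.mem_lowQuot]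
  constructor
  · intro h i j hj
    exact h i j ((S.restrict_lt_iff j i).mpr hj)
  · intro h i j hj
    exact h i j ((S.restrict_lt_iff j i).mp hj)

lemma mem_fiberD_iff (Y : Matrix (Fin n) (Fin n) F) :
    (Submodule.Quotient.mk Y : S.DSys.P.LSpace F) ∈ S.DSys.fiber F ↔
      Y - S.Mmat F ∈ (S.P.restrictTo S.m).lowQuot F := by
  rw [S.DSys.mem_fiber_iff F Y, S.DSys_Mmat F, S.restrict_lowQuot_eq F]

lemma mem_stabD_iff (g : S.DSys.P.patternGroup F) :
    g ∈ S.DSys.stab F ↔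
      (((g : (Matrix (Fin n) (Fin n) F)ˣ) : Matrix (Fin n) (Fin n) F) * S.Mmat F *
          ((((g : (Matrix (Fin n) (Fin n) F)ˣ))⁻¹ : (Matrix (Fin n) (Fin n) F)ˣ) :
            Matrix (Fin n) (Fin n) F) - S.Mmat F)
        ∈ (S.P.restrictTo S.m).lowQuot F := by
  rw [S.DSys.mem_stab_iff F g, S.DSys_Mmat F, S.restrict_lowQuot_eq F]

lemma mem_algP_of_algD {X : Matrix (Fin n) (Fin n) F} (hX : X ∈ S.D.patternAlg F) :
    X ∈ S.P.patternAlg F := by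
  intro i j h
  exact hX i j (fun hc => h hc.1)

lemma lowQuot_le : S.P.lowQuot F ≤ S.D.lowQuot F := by
  intro X hX i j h
  exact hX i j h.1

/-- The quotient map `L_P(q) → L_{D(S)}(q)`. -/
noncomputable def rho : S.P.LSpace F →ₗ[F] S.D.LSpace F :=
  Submodule.mapQ _ _ LinearMap.id (S.lowQuot_le F)

lemma rho_mk (Y : Matrix (Fin n) (Fin n) F) :
    S.rho F (Submodule.Quotient.mk Y) = Submodule.Quotient.mk Y := by
  unfold rho
  rw [Submodule.mapQ_apply]
  rfl

lemma row_m_eq {u : Matrix (Fin n) (Fin n) F} (hu : u - 1 ∈ S.P.patternAlg F) (k : Fin n) :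
    u S.m k = (1 : Matrix (Fin n) (Fin n) F) S.m k := by
  have h := hu S.m k (S.m_max k)
  rw [Matrix.sub_apply] at h
  exact sub_eq_zero.mp h

lemma stab_sum {g : S.P.patternGroup F} (hg : g ∈ S.stab F) {j : Fin n}
    (hj : S.P.lt j S.m) :
    (∑ a ∈ S.A,
        ((((g : (Matrix (Fin n) (Fin n) F)ˣ))⁻¹ : (Matrix (Fin n) (Fin n) F)ˣ) :
          Matrix (Fin n) (Fin n) F) a j)
      = if j ∈ S.A then (1 : F) else 0 := by
  classical
  set u : Matrix (Fin n) (Fin n) F := ((g : (Matrix (Fin n) (Fin n) F)ˣ) : Matrix (Fin n) (Fin n) F) with hu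
  set v : Matrix (Fin n) (Fin n) F :=
    ((((g : (Matrix (Fin n) (Fin n) F)ˣ))⁻¹ : (Matrix (Fin n) (Fin n) F)ˣ) :
      Matrix (Fin n) (Fin n) F) with hv
  have h0 := (S.mem_stab_iff F g).mp hg S.m j ⟨rfl, hj⟩
  rw [Matrix.sub_apply, sub_eq_zero] at h0
  have h1 : (u * S.Mmat F * v) S.m j = (S.Mmat F * v) S.m j := by
    rw [mul_assoc, Matrix.mul_apply]
    have hrow : ∀ k, u S.m k = (1 : Matrix (Fin n) (Fin n) F) S.m k :=
      fun k => S.row_m_eq F g.2 k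
    have : ∀ k, u S.m k * (S.Mmat F * v) k j
        = (1 : Matrix (Fin n) (Fin n) F) S.m k * (S.Mmat F * v) k j := by
      intro k
      rw [hrow k]
    rw [Finset.sum_congr rfl (fun k _ => this k), ← Matrix.mul_apply, one_mul]
  have h2 : (S.Mmat F * v) S.m j = ∑ a ∈ S.A, v a j := by
    rw [Matrix.mul_apply]
    have : ∀ l, S.Mmat F S.m l * v l j = if l ∈ S.A then v l j else 0 := by
      intro l
      rw [S.Mmat_apply F]
      by_cases hl : l ∈ S.A
      · simp [hl]
      · simp [hl]
    rw [Finset.sum_congr rfl (fun l _ => this l), Finset.sum_ite_mem, Finset.univ_inter]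
  have h3 : S.Mmat F S.m j = if j ∈ S.A then (1 : F) else 0 := by
    rw [S.Mmat_apply F]; simp
  rw [← h2, ← h1, h0, h3]

lemma stab_inv_entry {g : S.P.patternGroup F} (hg : g ∈ S.stab F) {a w : Fin n}
    (ha : a ∈ S.A) (haw : S.P.lt a w) (hwm : S.P.lt w S.m)
    (huniq : ∀ b ∈ S.A, S.P.lt b w → b = a) :
    ((((g : (Matrix (Fin n) (Fin n) F)ˣ))⁻¹ : (Matrix (Fin n) (Fin n) F)ˣ) :
      Matrix (Fin n) (Fin n) F) a w = 0 := by
  classical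
  set v : Matrix (Fin n) (Fin n) F :=
    ((((g : (Matrix (Fin n) (Fin n) F)ˣ))⁻¹ : (Matrix (Fin n) (Fin n) F)ˣ) :
      Matrix (Fin n) (Fin n) F) with hv
  have hwA : w ∉ S.A := fun hw => S.A_anti a ha w hw haw
  have hsum := S.stab_sum F hg hwm
  rw [if_neg hwA] at hsum
  have hvP : v - 1 ∈ S.P.patternAlg F := PatternPoset.inv_sub_one_mem g.2
  have hz : ∀ b ∈ S.A, b ≠ a → v b w = 0 := by
    intro b hb hba
    have hnb : ¬ S.P.lt b w := fun h => hba (huniq b hb h)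
    have hbw : b ≠ w := fun h => hwA (h ▸ hb)
    have h1 := hvP b w hnb
    rw [Matrix.sub_apply, Matrix.one_apply_ne hbw, sub_zero] at h1
    exact h1
  have : ∑ b ∈ S.A, v b w = v a w := Finset.sum_eq_single_of_mem a ha hz
  rw [this] at hsum
  exact hsum

lemma stab_entry_zero {g : S.P.patternGroup F} (hg : g ∈ S.stab F) {a w : Fin n}
    (ha : a ∈ S.A) (haw : S.P.lt a w) (hwm : S.P.lt w S.m)
    (huniq : ∀ b ∈ S.A, S.P.lt b w → b = a) :
    ((g : (Matrix (Fin n) (Fin n) F)ˣ) : Matrix (Fin n) (Fin n) F) a w = 0 := by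
  have h := S.stab_inv_entry F (S.inv_mem_stab F hg) ha haw hwm huniq
  simpa using h

lemma stab_mem_algD {g : S.P.patternGroup F} (hg : g ∈ S.stab F) :
    (((g : (Matrix (Fin n) (Fin n) F)ˣ) : Matrix (Fin n) (Fin n) F) - 1)
      ∈ S.D.patternAlg F := by
  intro i j h
  by_cases hP : S.P.lt i j
  · have hdel : i ∈ S.A ∧ S.P.lt j S.m ∧ ∀ b ∈ S.A, S.P.lt b j → b = i := by
      by_contra hc
      exact h ⟨hP, hc⟩
    obtain ⟨hiA, hjm, huniq⟩ := hdel
    have hne : i ≠ j := S.P.ne_of_lt hP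
    rw [Matrix.sub_apply, Matrix.one_apply_ne hne, sub_zero]
    exact S.stab_entry_zero F hg hiA hP hjm huniq
  · exact g.2 i j hP

/-- Lift an element of `Stab_P(1_A)` to the pattern group of `D(S)`. -/
noncomputable def liftD {g : S.P.patternGroup F} (hg : g ∈ S.stab F) :
    S.DSys.P.patternGroup F :=
  ⟨(g : (Matrix (Fin n) (Fin n) F)ˣ), S.stab_mem_algD F hg⟩

lemma liftD_mem_stab {g : S.P.patternGroup F} (hg : g ∈ S.stab F) :
    S.liftD F hg ∈ S.DSys.stab F := by
  rw [S.mem_stabD_iff F]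
  exact (S.mem_stab_iff F g).mp hg

/-- Lift an element of the pattern group of `D(S)` to that of `P`. -/
noncomputable def liftP (g : S.DSys.P.patternGroup F) : S.P.patternGroup F :=
  ⟨(g : (Matrix (Fin n) (Fin n) F)ˣ), S.mem_algP_of_algD F g.2⟩

lemma liftP_mem_stab {g : S.DSys.P.patternGroup F} (hg : g ∈ S.DSys.stab F) :
    S.liftP F g ∈ S.stab F := by
  rw [S.mem_stab_iff F]
  exact (S.mem_stabD_iff F g).mp hg

lemma rho_coadj {g : S.P.patternGroup F} (hg : g ∈ S.stab F) (X : S.P.LSpace F) :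
    S.rho F (S.P.coadj F g X) = S.DSys.P.coadj F (S.liftD F hg) (S.rho F X) := by
  obtain ⟨Y, rfl⟩ := Submodule.Quotient.mk_surjective _ X
  rw [PatternPoset.coadj_mk, S.rho_mk F, S.rho_mk F]
  rfl

lemma rho_coadj' (g : S.DSys.P.patternGroup F) (X : S.P.LSpace F) :
    S.DSys.P.coadj F g (S.rho F X) = S.rho F (S.P.coadj F (S.liftP F g) X) := by
  obtain ⟨Y, rfl⟩ := Submodule.Quotient.mk_surjective _ X
  rw [PatternPoset.coadj_mk, S.rho_mk F, S.rho_mk F]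
  rfl

/-- The key transvection construction: within the fiber, any difference supported on
deleted cells is realized by a stabilizer element. -/
lemma exists_transvection (Y1 Δ : Matrix (Fin n) (Fin n) F)
    (hY1 : Y1 - S.Mmat F ∈ (S.P.restrictTo S.m).lowQuot F)
    (hΔ : Δ ∈ S.D.lowQuot F) :
    ∃ g ∈ S.stab F,
      S.P.coadj F g (Submodule.Quotient.mk Y1) = Submodule.Quotient.mk (Y1 + Δ) := by
  classical
  set c : Fin n → F := fun i => ∑ b ∈ S.A,
    (if S.P.lt b i ∧ S.P.lt i S.m ∧ (∀ b' ∈ S.A, S.P.lt b' i → b' = b)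
      then Δ i b else 0) with hc
  have hcapp : ∀ i, c i = ∑ b ∈ S.A,
      (if S.P.lt b i ∧ S.P.lt i S.m ∧ (∀ b' ∈ S.A, S.P.lt b' i → b' = b)
        then Δ i b else 0) := fun i => rfl
  set N : Matrix (Fin n) (Fin n) F :=
    Matrix.of (fun i k => if k = S.m then c i else 0) with hN
  have hNapp : ∀ i k, N i k = if k = S.m then c i else 0 := fun i k => rfl
  have hcm : c S.m = 0 := by
    rw [hcapp]
    apply Finset.sum_eq_zero
    intro b _
    rw [if_neg]
    rintro ⟨-, h2, -⟩
    exact S.P.lt_irrefl _ h2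
  have hcmlt : ∀ i, c i ≠ 0 → S.P.lt i S.m := by
    intro i hi
    rw [hcapp] at hi
    obtain ⟨b, -, hb⟩ := Finset.exists_ne_zero_of_sum_ne_zero hi
    by_cases h : S.P.lt b i ∧ S.P.lt i S.m ∧ (∀ b' ∈ S.A, S.P.lt b' i → b' = b)
    · exact h.2.1
    · rw [if_neg h] at hb; exact absurd rfl hb
  have hcA : ∀ b ∈ S.A, c b = 0 := by
    intro b hb
    rw [hc]
    apply Finset.sum_eq_zero
    intro b' hb'
    rw [if_neg]
    rintro ⟨h1, -, -⟩
    exact S.A_anti b' hb' b hb h1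
  have hrowm : ∀ k, N S.m k = 0 := by
    intro k
    rw [hNapp]
    by_cases hk : k = S.m
    · rw [if_pos hk, hcm]
    · rw [if_neg hk]
  have hXN : ∀ (X : Matrix (Fin n) (Fin n) F) (i j : Fin n), j ≠ S.m → (X * N) i j = 0 := by
    intro X i j hj
    rw [Matrix.mul_apply]
    apply Finset.sum_eq_zero
    intro k _
    rw [hNapp, if_neg hj, mul_zero]
  have hNX : ∀ (X : Matrix (Fin n) (Fin n) F) (i j : Fin n), (N * X) i j = c i * X S.m j := by
    intro X i j
    rw [Matrix.mul_apply]
    rw [Finset.sum_eq_single S.m]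
    · rw [hNapp, if_pos rfl]
    · intro k _ hk
      rw [hNapp, if_neg hk, zero_mul]
    · intro h
      exact absurd (Finset.mem_univ _) h
  have hNN : N * N = 0 := by
    ext i j
    rw [hNX, Matrix.zero_apply]
    rw [hrowm, mul_zero]
  have hMN : S.Mmat F * N = 0 := by
    ext i j
    rw [Matrix.mul_apply, Matrix.zero_apply]
    apply Finset.sum_eq_zero
    intro k _
    rw [S.Mmat_apply F]
    by_cases hk : S.m = i ∧ k ∈ S.A
    · rw [if_pos hk, hNapp]
      by_cases hj : j = S.m
      · rw [if_pos hj, hcA k hk.2, mul_zero]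
      · rw [if_neg hj, mul_zero]
    · rw [if_neg hk, zero_mul]
  have hunit1 : (1 + N) * (1 - N) = 1 := by
    have : (1 + N) * (1 - N) = 1 - N * N := by noncomm_ring
    rw [this, hNN, sub_zero]
  have hunit2 : (1 - N) * (1 + N) = 1 := by
    have : (1 - N) * (1 + N) = 1 - N * N := by noncomm_ring
    rw [this, hNN, sub_zero]
  set u : (Matrix (Fin n) (Fin n) F)ˣ := ⟨1 + N, 1 - N, hunit1, hunit2⟩ with hudef
  have hmem : (u : Matrix (Fin n) (Fin n) F) - 1 ∈ S.P.patternAlg F := by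
    intro i j h
    show (1 + N - 1) i j = 0
    have : (1 : Matrix (Fin n) (Fin n) F) + N - 1 = N := by abel
    rw [this, hNapp]
    by_cases hj : j = S.m
    · rw [if_pos hj]
      by_contra hci
      exact h (hj ▸ hcmlt i hci)
    · rw [if_neg hj]
  set g : S.P.patternGroup F := ⟨u, hmem⟩ with hgdef
  have hgval : ((g : (Matrix (Fin n) (Fin n) F)ˣ) : Matrix (Fin n) (Fin n) F) = 1 + N := rfl
  have hginv : ((((g : (Matrix (Fin n) (Fin n) F)ˣ))⁻¹ : (Matrix (Fin n) (Fin n) F)ˣ) :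
      Matrix (Fin n) (Fin n) F) = 1 - N := rfl
  have hgstab : g ∈ S.stab F := by
    rw [S.mem_stab_iff F]
    rw [hgval, hginv]
    have hexp : (1 + N) * S.Mmat F * (1 - N) - S.Mmat F
        = N * S.Mmat F - S.Mmat F * N - N * (S.Mmat F * N) := by noncomm_ring
    rw [hexp, hMN, mul_zero, sub_zero, sub_zero]
    intro i j hlt
    obtain ⟨hi, -⟩ := hlt
    subst hi
    rw [hNX, hcm, zero_mul]
  refine ⟨g, hgstab, ?_⟩
  rw [PatternPoset.coadj_mk, hgval, hginv, Submodule.Quotient.eq]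
  have hexp2 : (1 + N) * Y1 * (1 - N) - (Y1 + Δ)
      = N * Y1 - Y1 * N - N * (Y1 * N) - Δ := by noncomm_ring
  rw [hexp2]
  intro i j hji
  have hjm : j ≠ S.m := by
    rintro rfl
    exact S.m_max i hji
  have hY1N : (Y1 * N) i j = 0 := hXN Y1 i j hjm
  have hNY1N : (N * (Y1 * N)) i j = 0 := by
    rw [hNX, hXN Y1 S.m j hjm, mul_zero]
  simp only [Matrix.sub_apply]
  rw [hNY1N, hY1N, hNX, sub_zero, sub_zero]
  -- goal : c i * Y1 S.m j - Δ i j = 0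
  by_cases hD : S.D.lt j i
  · rw [hΔ i j hD, sub_zero]
    by_cases hci : c i = 0
    · rw [hci, zero_mul]
    · have him : S.P.lt i S.m := hcmlt i hci
      have hjmlt : S.P.lt j S.m := S.P.lt_trans hji him
      have hY1mj : Y1 S.m j = if j ∈ S.A then (1 : F) else 0 := by
        have h1 := hY1 S.m j ⟨rfl, hjmlt⟩
        rw [Matrix.sub_apply, sub_eq_zero] at h1
        rw [h1, S.Mmat_apply F]
        simp
      by_cases hjA : j ∈ S.A
      · exfalso
        -- then relation (j,i) should have been deleted
        rw [hcapp] at hci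
        obtain ⟨b, hbA, hb⟩ := Finset.exists_ne_zero_of_sum_ne_zero hci
        by_cases hcond : S.P.lt b i ∧ S.P.lt i S.m ∧ (∀ b' ∈ S.A, S.P.lt b' i → b' = b)
        · have hjb : j = b := hcond.2.2 j hjA hji
          subst hjb
          exact hD.2 ⟨hjA, hcond.2.1, hcond.2.2⟩
        · rw [if_neg hcond] at hb; exact absurd rfl hb
      · rw [hY1mj, if_neg hjA, mul_zero]
  · -- deleted cell
    have hdel : j ∈ S.A ∧ S.P.lt i S.m ∧ ∀ b ∈ S.A, S.P.lt b i → b = j := by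
      by_contra hcon
      exact hD ⟨hji, hcon⟩
    obtain ⟨hjA, him, huniq⟩ := hdel
    have hjmlt : S.P.lt j S.m := S.P.lt_trans hji him
    have hY1mj : Y1 S.m j = 1 := by
      have h1 := hY1 S.m j ⟨rfl, hjmlt⟩
      rw [Matrix.sub_apply, sub_eq_zero] at h1
      rw [h1, S.Mmat_apply F, if_pos ⟨rfl, hjA⟩]
    have hci : c i = Δ i j := by
      rw [hcapp]
      rw [Finset.sum_eq_single_of_mem j hjA]
      · rw [if_pos ⟨hji, him, huniq⟩]
      · intro b hbA hbj
        rw [if_neg]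
        rintro ⟨-, -, huniq'⟩
        exact hbj.symm (huniq' j hjA hji)
    rw [hci, hY1mj, mul_one, sub_self]

lemma orb_eq_of_mem {X Y : S.P.LSpace F}
    (h : Y ∈ {Z | ∃ g ∈ S.stab F, S.P.coadj F g X = Z}) :
    {Z | ∃ g ∈ S.stab F, S.P.coadj F g Y = Z}
      = {Z | ∃ g ∈ S.stab F, S.P.coadj F g X = Z} := by
  obtain ⟨g, hg, rfl⟩ := h
  ext Z
  simp only [Set.mem_setOf_eq]
  constructor
  · rintro ⟨k, hk, rfl⟩
    exact ⟨k * g, S.mul_mem_stab F hk hg, S.P.coadj_mul F k g X⟩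
  · rintro ⟨k, hk, rfl⟩
    refine ⟨k * g⁻¹, S.mul_mem_stab F hk (S.inv_mem_stab F hg), ?_⟩
    rw [S.P.coadj_mul F, ← S.P.coadj_mul F g⁻¹ g X, inv_mul_cancel, S.P.coadj_one F]

lemma image_orb (X : S.P.LSpace F) :
    S.rho F '' {Y | ∃ g ∈ S.stab F, S.P.coadj F g X = Y}
      = {Y | ∃ g' ∈ S.DSys.stab F, S.DSys.P.coadj F g' (S.rho F X) = Y} := by
  ext Z
  constructor
  · rintro ⟨Y, ⟨g, hg, rfl⟩, rfl⟩
    exact ⟨S.liftD F hg, S.liftD_mem_stab F hg, (S.rho_coadj F hg X).symm⟩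
  · rintro ⟨g', hg', rfl⟩
    refine ⟨S.P.coadj F (S.liftP F g') X, ⟨S.liftP F g', S.liftP_mem_stab F hg', rfl⟩, ?_⟩
    exact (S.rho_coadj' F g' X).symm

lemma rho_mem_fiber {X : S.P.LSpace F} (hX : X ∈ S.fiber F) :
    S.rho F X ∈ S.DSys.fiber F := by
  obtain ⟨Y, rfl⟩ := Submodule.Quotient.mk_surjective _ X
  rw [S.rho_mk F]
  exact (S.mem_fiberD_iff F Y).mpr ((S.mem_fiber_iff F Y).mp hX)

end PosetSystem


/-- **Lemma 4.6**: for every poset system `S = (P, m, A)`,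
`k(P, m, A; q) = k(D(S), m, A; q)`. -/
theorem systemK_D (n : ℕ) (S : PosetSystem n)
    (F : Type) [Field F] [Fintype F] (hq : IsPrimePow (Fintype.card F)) :
    S.systemK F = S.DSys.systemK F := by
  classical
  unfold PosetSystem.systemK
  have key : ∀ O : {O : Set (S.P.LSpace F) // ∃ X ∈ S.fiber F,
      O = {Y | ∃ g ∈ S.stab F, S.P.coadj F g X = Y}},
      ∃ X ∈ S.DSys.fiber F,
        S.rho F '' O.1 = {Y | ∃ g ∈ S.DSys.stab F, S.DSys.P.coadj F g X = Y} := by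
    rintro ⟨O, X, hX, rfl⟩
    exact ⟨S.rho F X, S.rho_mem_fiber F hX, S.image_orb F X⟩
  refine Nat.card_eq_of_bijective (fun O => ⟨S.rho F '' O.1, key O⟩) ⟨?_, ?_⟩
  · -- injectivity
    rintro ⟨O1, hO1⟩ ⟨O2, hO2⟩ h
    obtain ⟨X1, hX1, rfl⟩ := hO1
    obtain ⟨X2, hX2, rfl⟩ := hO2
    apply Subtype.ext
    have himg := congrArg Subtype.val h
    simp only at himg
    replace himg := (S.image_orb F X1).symm.trans (himg.trans (S.image_orb F X2))
    have hmem : S.rho F X2 ∈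
        {Y | ∃ g ∈ S.DSys.stab F, S.DSys.P.coadj F g (S.rho F X1) = Y} := by
      rw [himg]
      exact ⟨1, S.DSys.one_mem_stab F, S.DSys.P.coadj_one F _⟩
    obtain ⟨g', hg', hgX⟩ := hmem
    have h2 : S.rho F (S.P.coadj F (S.liftP F g') X1) = S.rho F X2 := by
      rw [← S.rho_coadj' F g' X1, hgX]
    set Z := S.P.coadj F (S.liftP F g') X1 with hZ
    have hZf : Z ∈ S.fiber F := S.coadj_mem_fiber F (S.liftP_mem_stab F hg') hX1
    obtain ⟨Y1, hY1⟩ := Submodule.Quotient.mk_surjective _ Z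
    obtain ⟨Y2, hY2⟩ := Submodule.Quotient.mk_surjective _ X2
    have hdiff : Y2 - Y1 ∈ S.D.lowQuot F := by
      have h3 := h2
      rw [← hY1, ← hY2, S.rho_mk F, S.rho_mk F] at h3
      have h4 := (Submodule.Quotient.eq _).mp h3
      have h5 := (S.D.lowQuot F).neg_mem h4
      rw [neg_sub] at h5
      exact h5
    have hY1f : Y1 - S.Mmat F ∈ (S.P.restrictTo S.m).lowQuot F :=
      (S.mem_fiber_iff F Y1).mp (by rw [hY1]; exact hZf)
    obtain ⟨t, ht, htZ⟩ := S.exists_transvection F Y1 (Y2 - Y1) hY1f hdiff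
    have hX2Z : X2 ∈ {Y | ∃ g ∈ S.stab F, S.P.coadj F g X1 = Y} := by
      refine ⟨t * S.liftP F g', S.mul_mem_stab F ht (S.liftP_mem_stab F hg'), ?_⟩
      rw [S.P.coadj_mul F, ← hZ, ← hY1, htZ,
        show Y1 + (Y2 - Y1) = Y2 from by abel, hY2]
    exact (S.orb_eq_of_mem F hX2Z).symm
  · -- surjectivity
    rintro ⟨O', hO'⟩
    obtain ⟨W, hW, rfl⟩ := hO'
    obtain ⟨Y, rfl⟩ := Submodule.Quotient.mk_surjective _ W
    have hYf : Y - S.Mmat F ∈ (S.P.restrictTo S.m).lowQuot F :=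
      (S.mem_fiberD_iff F Y).mp hW
    have hXf : (Submodule.Quotient.mk Y : S.P.LSpace F) ∈ S.fiber F :=
      (S.mem_fiber_iff F Y).mpr hYf
    refine ⟨⟨{Z | ∃ g ∈ S.stab F, S.P.coadj F g (Submodule.Quotient.mk Y) = Z},
      ⟨Submodule.Quotient.mk Y, hXf, rfl⟩⟩, ?_⟩
    apply Subtype.ext
    show S.rho F '' _ = _
    rw [S.image_orb F, S.rho_mk F]
    rfl
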